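/- For Re(p) > 0 and Re(a) > 1, ∫_0^∞ x^{a-1}·(cosh(px) - 1)/sinh(x) dx = (Γ(a)/2^a)·(ζ(a, 1/2 - p/2) + ζ(a, 1/2 + p/2) - 2·ζ(a, 1/2)), provided |Re(p)| < 1. -/

import Mathlib

open Real Finset

open MeasureTheory Set Filter Topology

lemma rpow_exp_integrable {s r : ℝ} (hs : 0 < s) (hr : 0 < r) :
    IntegrableOn (fun t : ℝ => t ^ (s - 1) * Real.exp (-(r * t))) (Set.Ioi 0) := by
  have h := Real.GammaIntegral_convergent hs
  rw [← mul_zero r, ← integrableOn_Ioi_comp_mul_left_iff _ _ hr] at h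
  refine IntegrableOn.congr_fun (h.const_mul (r ^ (1 - s))) (fun t ht => ?_) measurableSet_Ioi
  rw [Set.mem_Ioi] at ht
  rw [Real.mul_rpow hr.le ht.le]
  rw [show (1:ℝ) - s = -(s-1) by ring, Real.rpow_neg hr.le]
  field_simp [Real.exp_ne_zero, (Real.rpow_pos_of_pos hr (s-1)).ne']

lemma cpow_cexp_aestronglyMeasurable (a c : ℂ) :
    AEStronglyMeasurable (fun t : ℝ => (t:ℂ) ^ (a - 1) * Complex.exp (-(c * t)))
      (volume.restrict (Set.Ioi (0:ℝ))) := by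
  refine ContinuousOn.aestronglyMeasurable ?_ measurableSet_Ioi
  apply ContinuousOn.mul
  · intro t ht
    refine (Complex.continuousAt_ofReal_cpow_const t (a-1) ?_).continuousWithinAt
    exact Or.inr (by exact_mod_cast (Set.mem_Ioi.mp ht).ne')
  · exact (Complex.continuous_exp.comp (by continuity)).continuousOn

lemma cpow_cexp_norm {a c : ℂ} {t : ℝ} (ht : 0 < t) :
    ‖(t:ℂ) ^ (a - 1) * Complex.exp (-(c * t))‖
      = t ^ (a.re - 1) * Real.exp (-(c.re * t)) := by
  rw [norm_mul, Complex.norm_cpow_eq_rpow_re_of_pos ht, Complex.norm_exp]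
  norm_num [Complex.sub_re, Complex.mul_re, Complex.ofReal_re, Complex.ofReal_im]

lemma cpow_cexp_integrable {a : ℂ} (ha : 0 < a.re) {c : ℂ} (hc : 0 < c.re) :
    IntegrableOn (fun t : ℝ => (t:ℂ) ^ (a - 1) * Complex.exp (-(c * t))) (Set.Ioi 0) := by
  refine Integrable.mono' (rpow_exp_integrable ha hc) (cpow_cexp_aestronglyMeasurable a c) ?_
  filter_upwards [ae_restrict_mem measurableSet_Ioi] with t ht
  rw [cpow_cexp_norm (Set.mem_Ioi.mp ht)]

lemma f_hasDerivAt {a : ℂ} (ha : 0 < a.re) {c : ℂ} (hc : 0 < c.re) :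
    HasDerivAt (fun z : ℂ => ∫ t in Set.Ioi (0:ℝ), (t:ℂ) ^ (a - 1) * Complex.exp (-(z * t)))
      (∫ t in Set.Ioi (0:ℝ), (t:ℂ) ^ (a - 1) * (Complex.exp (-(c * t)) * (-(t:ℂ)))) c := by
  have hε : (0:ℝ) < c.re / 2 := by linarith
  have hmeas : ∀ z : ℂ, AEStronglyMeasurable
      (fun t : ℝ => (t:ℂ) ^ (a - 1) * Complex.exp (-(z * t)))
      (volume.restrict (Set.Ioi (0:ℝ))) := fun z => cpow_cexp_aestronglyMeasurable a z
  have hmeas' : AEStronglyMeasurable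
      (fun t : ℝ => (t:ℂ) ^ (a - 1) * (Complex.exp (-(c * t)) * (-(t:ℂ))))
      (volume.restrict (Set.Ioi (0:ℝ))) := by
    have : Continuous (fun t : ℝ => -(t:ℂ)) := Complex.continuous_ofReal.neg
    have h2 := (hmeas c).mul this.aestronglyMeasurable.restrict
    exact h2.congr (Filter.Eventually.of_forall fun t => mul_assoc _ _ _)
  have key := hasDerivAt_integral_of_dominated_loc_of_deriv_le (μ := volume.restrict (Set.Ioi 0))
    (F := fun (z : ℂ) (t : ℝ) => (t:ℂ) ^ (a - 1) * Complex.exp (-(z * t)))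
    (F' := fun (z : ℂ) (t : ℝ) => (t:ℂ) ^ (a - 1) * (Complex.exp (-(z * t)) * (-(t:ℂ))))
    (x₀ := c) (bound := fun t : ℝ => t ^ a.re * Real.exp (-(c.re / 2 * t)))
    (s := Metric.ball c (c.re / 2)) (Metric.ball_mem_nhds c hε)
    (Filter.Eventually.of_forall hmeas)
    (cpow_cexp_integrable ha hc)
    hmeas'
    ?_ ?_ ?_
  · exact key.2
  · -- bound
    filter_upwards [ae_restrict_mem measurableSet_Ioi] with t ht z hz
    rw [Set.mem_Ioi] at ht
    rw [norm_mul, norm_mul, Complex.norm_cpow_eq_rpow_re_of_pos ht, Complex.norm_exp]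
    have h1 : (-(z * (t:ℂ))).re = -(z.re * t) := by
      simp [Complex.mul_re, Complex.ofReal_re, Complex.ofReal_im]
    rw [h1]
    have h2 : ‖(-(t:ℂ))‖ = t := by
      rw [norm_neg, Complex.norm_real, Real.norm_eq_abs, abs_of_pos ht]
    rw [h2, Complex.sub_re, Complex.one_re]
    have h3 : t ^ (a.re - 1) * (Real.exp (-(z.re * t)) * t)
        = t ^ a.re * Real.exp (-(z.re * t)) := by
      rw [show a.re = (a.re - 1) + 1 by ring, Real.rpow_add_one ht.ne']
      ring
    rw [h3]
    have hzre : c.re / 2 ≤ z.re := by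
      have h5 := Complex.abs_re_le_norm (z - c)
      rw [Complex.sub_re] at h5
      have hlt : ‖z - c‖ < c.re / 2 := by
        rw [Metric.mem_ball, Complex.dist_eq] at hz; exact hz
      have h6 := abs_lt.mp (lt_of_le_of_lt h5 hlt)
      linarith [h6.1]
    have hexp : Real.exp (-(z.re * t)) ≤ Real.exp (-(c.re / 2 * t)) := by
      apply Real.exp_le_exp.mpr
      nlinarith
    have h4 : (0:ℝ) < t ^ a.re := Real.rpow_pos_of_pos ht _
    nlinarith
  · -- bound integrable
    have := rpow_exp_integrable (s := a.re + 1) (r := c.re / 2) (by linarith) hε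
    simpa [IntegrableOn] using this
  · -- differentiability
    filter_upwards [ae_restrict_mem measurableSet_Ioi] with t ht z hz
    have h : HasDerivAt (fun z : ℂ => -(z * (t:ℂ))) (-(t:ℂ)) z := by
      exact (hasDerivAt_mul_const (t:ℂ)).neg
    exact (h.cexp).const_mul _

lemma integral_cpow_mul_cexp {a : ℂ} (ha : 0 < a.re) {c : ℂ} (hc : 0 < c.re) :
    ∫ t in Set.Ioi (0:ℝ), (t:ℂ) ^ (a - 1) * Complex.exp (-(c * t))
      = Complex.Gamma a * c ^ (-a) := by
  set U : Set ℂ := {z : ℂ | 0 < z.re} with hUdef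
  have hU : IsOpen U := isOpen_lt continuous_const Complex.continuous_re
  set f : ℂ → ℂ := fun z => ∫ t in Set.Ioi (0:ℝ), (t:ℂ) ^ (a - 1) * Complex.exp (-(z * t))
    with hfdef
  set g : ℂ → ℂ := fun z => Complex.Gamma a * z ^ (-a) with hgdef
  have hf : AnalyticOnNhd ℂ f U := by
    apply DifferentiableOn.analyticOnNhd _ hU
    intro z hz
    exact ((f_hasDerivAt ha hz).differentiableAt).differentiableWithinAt
  have hg : AnalyticOnNhd ℂ g U := by
    apply DifferentiableOn.analyticOnNhd _ hU
    intro z hz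
    refine ((differentiableAt_id.cpow (differentiableAt_const _) ?_).const_mul _).differentiableWithinAt
    exact Or.inl hz
  have h1U : (1:ℂ) ∈ U := by simp [hUdef]
  have hreal : ∀ r : ℝ, 0 < r → f r = g r := by
    intro r hr
    have h := Complex.integral_cpow_mul_exp_neg_mul_Ioi ha hr
    rw [hfdef, hgdef]
    simp only []
    rw [h]
    rw [one_div, Complex.inv_cpow _ _ (by
      rw [Complex.arg_ofReal_of_nonneg hr.le]
      exact Real.pi_ne_zero.symm), ← Complex.cpow_neg]
    ring
  have hfreq : ∃ᶠ z in nhdsWithin (1:ℂ) {(1:ℂ)}ᶜ, f z = g z := by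
    have hseq : Filter.Tendsto (fun n : ℕ => ((1 + ((n:ℝ)+1)⁻¹ : ℝ) : ℂ)) Filter.atTop
        (nhdsWithin (1:ℂ) {(1:ℂ)}ᶜ) := by
      apply tendsto_nhdsWithin_of_tendsto_nhds_of_eventually_within
      · have : Filter.Tendsto (fun n : ℕ => (1 + ((n:ℝ)+1)⁻¹ : ℝ)) Filter.atTop (nhds 1) := by
          have := tendsto_one_div_add_atTop_nhds_zero_nat (𝕜 := ℝ)
          simpa [one_div] using (tendsto_const_nhds (x := (1:ℝ))).add this
        have h2 := (Complex.continuous_ofReal.tendsto 1).comp this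
        exact h2
      · apply Filter.Eventually.of_forall
        intro n
        simp only [Set.mem_compl_iff, Set.mem_singleton_iff]
        intro hcon
        have : (1 + ((n:ℝ)+1)⁻¹ : ℝ) = 1 := by exact_mod_cast hcon
        have hpos : (0:ℝ) < ((n:ℝ)+1)⁻¹ := by positivity
        linarith
    apply hseq.frequently
    exact (Filter.Eventually.of_forall fun n => hreal _ (by positivity)).frequently
  have heq := hf.eqOn_of_preconnected_of_frequently_eq hg
    ((convex_halfSpace_re_gt 0).isPreconnected) h1U hfreq
  exact heq hc

lemma ofReal_mul_cpow {r : ℝ} (hr : 0 < r) {z : ℂ} (hz : z ≠ 0) (w : ℂ) :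
    ((r:ℂ) * z) ^ w = (r:ℂ) ^ w * z ^ w := by
  rw [Complex.cpow_def_of_ne_zero (mul_ne_zero (Complex.ofReal_ne_zero.mpr hr.ne') hz),
    Complex.cpow_def_of_ne_zero (Complex.ofReal_ne_zero.mpr hr.ne'),
    Complex.cpow_def_of_ne_zero hz, Complex.log_ofReal_mul hr hz, add_mul, Complex.exp_add,
    Complex.ofReal_log hr.le]

lemma norm_cpow_neg_le {a v : ℂ} (ha : 0 ≤ a.re) (hv : 0 < v.re) :
    ‖v ^ (-a)‖ ≤ Real.exp (Real.pi * |a.im|) * v.re ^ (-a.re) := by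
  have hvne : v ≠ 0 := fun h => by simp [h] at hv
  rw [Complex.norm_cpow_of_ne_zero hvne]
  have habs : 0 < ‖v‖ := norm_pos_iff.mpr hvne
  have h1 : ‖v‖ ^ (-a).re ≤ v.re ^ (-a.re) := by
    rw [Complex.neg_re]
    exact Real.rpow_le_rpow_of_nonpos hv (Complex.re_le_norm v)
      (neg_nonpos.mpr ha)
  have h2 : Real.exp (-(Real.pi * |a.im|)) ≤ Real.exp (v.arg * (-a).im) := by
    apply Real.exp_le_exp.mpr
    have := Complex.abs_arg_le_pi v
    have h3 : |v.arg * (-a).im| ≤ Real.pi * |a.im| := by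
      rw [abs_mul, Complex.neg_im, abs_neg]
      exact mul_le_mul_of_nonneg_right this (abs_nonneg _)
    linarith [(abs_le.mp h3).1]
  calc ‖v‖ ^ (-a).re / Real.exp (v.arg * (-a).im)
      ≤ v.re ^ (-a.re) / Real.exp (-(Real.pi * |a.im|)) := by
        exact div_le_div₀ (by positivity) h1 (Real.exp_pos _) h2
    _ = Real.exp (Real.pi * |a.im|) * v.re ^ (-a.re) := by
        rw [Real.exp_neg, div_inv_eq_mul, mul_comm]

lemma summable_hzeta_term {a v : ℂ} (ha : 1 < a.re) (hv : 0 < v.re) :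
    Summable (fun n : ℕ => ((n:ℂ) + v) ^ (-a)) := by
  apply Summable.of_norm
  set m := min 1 v.re with hm
  have hm0 : 0 < m := lt_min one_pos hv
  have comp : Summable (fun n : ℕ =>
      (Real.exp (Real.pi * |a.im|) * m ^ (-a.re)) * (1 / |(n:ℝ) + 1| ^ a.re)) :=
    ((Real.summable_one_div_nat_add_rpow 1 a.re).mpr ha).mul_left _
  apply comp.of_nonneg_of_le (fun n => norm_nonneg _)
  intro n
  have hrev : ((n:ℂ) + v).re = (n:ℝ) + v.re := by simp [Complex.add_re]
  have hre : 0 < ((n:ℂ) + v).re := by rw [hrev]; positivity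
  refine (norm_cpow_neg_le (by linarith) hre).trans ?_
  rw [hrev]
  have h1 : m ≤ 1 := min_le_left _ _
  have h2 : m ≤ v.re := min_le_right _ _
  have hn0 : (0:ℝ) ≤ (n:ℝ) := Nat.cast_nonneg n
  have hb : m * ((n:ℝ) + 1) ≤ (n:ℝ) + v.re := by nlinarith
  have hmono : ((n:ℝ) + v.re) ^ (-a.re) ≤ (m * ((n:ℝ) + 1)) ^ (-a.re) :=
    Real.rpow_le_rpow_of_nonpos (by positivity) hb (by linarith)
  have heq : (m * ((n:ℝ) + 1)) ^ (-a.re)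
      = m ^ (-a.re) * (1 / |(n:ℝ) + 1| ^ a.re) := by
    rw [Real.mul_rpow hm0.le (by positivity), abs_of_pos (by positivity : (0:ℝ) < (n:ℝ)+1),
      Real.rpow_neg (by positivity : (0:ℝ) ≤ (n:ℝ)+1), one_div]
  calc Real.exp (Real.pi * |a.im|) * ((n:ℝ) + v.re) ^ (-a.re)
      ≤ Real.exp (Real.pi * |a.im|) * (m * ((n:ℝ) + 1)) ^ (-a.re) :=
        mul_le_mul_of_nonneg_left hmono (Real.exp_pos _).le
    _ = Real.exp (Real.pi * |a.im|) * m ^ (-a.re) * (1 / |(n:ℝ) + 1| ^ a.re) := by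
        rw [heq]; ring

lemma hasSum_kernel (p : ℂ) {x : ℝ} (hx : 0 < x) :
    HasSum (fun n : ℕ =>
        Complex.exp (-((2*n+1-p) * x)) + Complex.exp (-((2*n+1+p) * x))
          - 2 * Complex.exp (-((2*n+1) * x)))
      ((Complex.cosh (p*x) - 1) / Complex.sinh (x:ℂ)) := by
  set r : ℂ := Complex.exp (-2 * x) with hr
  have hrnorm : ‖r‖ < 1 := by
    rw [hr, Complex.norm_exp]
    have h0 : (-2 * (x:ℂ)).re = -2 * x := by simp [Complex.mul_re]
    rw [h0, Real.exp_lt_one_iff]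
    linarith
  have hgeo : HasSum (fun n : ℕ => r ^ n) (1 - r)⁻¹ := hasSum_geometric_of_norm_lt_one hrnorm
  set q : ℂ := Complex.exp ((p-1) * x) + Complex.exp ((-p-1) * x) - 2 * Complex.exp (-x) with hq
  have h := hgeo.mul_left q
  have hB : Complex.exp (x:ℂ) ≠ 0 := Complex.exp_ne_zero _
  have hA : Complex.exp (p * x) ≠ 0 := Complex.exp_ne_zero _
  have h1r : (1:ℂ) - r ≠ 0 := by
    intro hcon
    rw [sub_eq_zero] at hcon
    rw [← hcon] at hrnorm
    simp at hrnorm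
  have hsinh : Complex.sinh (x:ℂ) ≠ 0 := by
    rw [← Complex.ofReal_sinh]
    exact_mod_cast (Real.sinh_pos_iff.mpr hx).ne'
  have e1 : Complex.exp ((p-1) * x) = Complex.exp (p*x) * (Complex.exp (x:ℂ))⁻¹ := by
    rw [← Complex.exp_neg, ← Complex.exp_add]; congr 1; ring
  have e2 : Complex.exp ((-p-1) * x)
      = (Complex.exp (p*x))⁻¹ * (Complex.exp (x:ℂ))⁻¹ := by
    rw [← Complex.exp_neg, ← Complex.exp_neg, ← Complex.exp_add]; congr 1; ring
  have e3 : Complex.exp (-(x:ℂ)) = (Complex.exp (x:ℂ))⁻¹ := Complex.exp_neg _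
  have e4 : r = (Complex.exp (x:ℂ))⁻¹ * (Complex.exp (x:ℂ))⁻¹ := by
    rw [hr, ← Complex.exp_neg, ← Complex.exp_add]; congr 1; ring
  have e5 : Complex.exp (-(p * (x:ℂ))) = (Complex.exp (p * x))⁻¹ := Complex.exp_neg _
  have hterm : ∀ n : ℕ, q * r ^ n
      = Complex.exp (-((2*n+1-p) * x)) + Complex.exp (-((2*n+1+p) * x))
          - 2 * Complex.exp (-((2*n+1) * x)) := by
    intro n
    have E1 : Complex.exp ((p-1)*x) * Complex.exp ((n:ℂ) * (-2*x))
        = Complex.exp (-((2*n+1-p) * x)) := by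
      rw [← Complex.exp_add]; congr 1; push_cast; ring
    have E2 : Complex.exp ((-p-1)*x) * Complex.exp ((n:ℂ) * (-2*x))
        = Complex.exp (-((2*n+1+p) * x)) := by
      rw [← Complex.exp_add]; congr 1; push_cast; ring
    have E3 : Complex.exp (-(x:ℂ)) * Complex.exp ((n:ℂ) * (-2*x))
        = Complex.exp (-((2*n+1) * x)) := by
      rw [← Complex.exp_add]; congr 1; push_cast; ring
    calc q * r ^ n = Complex.exp ((p-1)*x) * (Complex.exp (-2*(x:ℂ)))^n
          + Complex.exp ((-p-1)*x) * (Complex.exp (-2*(x:ℂ)))^n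
          - 2 * (Complex.exp (-(x:ℂ)) * (Complex.exp (-2*(x:ℂ)))^n) := by
          rw [hq, hr]; ring
      _ = _ := by rw [← Complex.exp_nat_mul, E1, E2, E3]
  have hval : q * (1 - r)⁻¹ = (Complex.cosh (p*x) - 1) / Complex.sinh (x:ℂ) := by
    rw [← div_eq_mul_inv, div_eq_div_iff h1r hsinh]
    have hc : Complex.cosh (p*x) = (Complex.exp (p*x) + Complex.exp (-(p*x))) / 2 := by
      rw [← Complex.two_cosh]; field_simp
    have hs : Complex.sinh (x:ℂ) = (Complex.exp (x:ℂ) - Complex.exp (-(x:ℂ))) / 2 := by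
      rw [← Complex.two_sinh]; field_simp
    have e1' : Complex.exp ((p-1) * x) = Complex.exp (p*x) * Complex.exp (-(x:ℂ)) := by
      rw [← Complex.exp_add]; congr 1; ring
    have e2' : Complex.exp ((-p-1) * x)
        = Complex.exp (-(p*(x:ℂ))) * Complex.exp (-(x:ℂ)) := by
      rw [← Complex.exp_add]; congr 1; ring
    have e4' : r = Complex.exp (-(x:ℂ)) * Complex.exp (-(x:ℂ)) := by
      rw [hr, ← Complex.exp_add]; congr 1; ring
    have g : Complex.exp (x:ℂ) * Complex.exp (-(x:ℂ)) = 1 := by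
      rw [← Complex.exp_add]; simp
    rw [hq, hc, hs, e1', e2', e4']
    linear_combination ((Complex.exp (p*x) + Complex.exp (-(p*(x:ℂ))) - 2)/2) * g
  rw [← hval]
  exact h.congr_fun fun n => (hterm n).symm

lemma integral_F {a : ℂ} (ha : 0 < a.re) {c1 c2 c3 : ℂ}
    (h1 : 0 < c1.re) (h2 : 0 < c2.re) (h3 : 0 < c3.re) :
    ∫ t in Set.Ioi (0:ℝ), (t:ℂ)^(a-1) *
        (Complex.exp (-(c1*t)) + Complex.exp (-(c2*t)) - 2*Complex.exp (-(c3*t)))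
      = Complex.Gamma a * (c1^(-a) + c2^(-a) - 2*c3^(-a)) := by
  have i1 := cpow_cexp_integrable ha h1
  have i2 := cpow_cexp_integrable ha h2
  have i3 := cpow_cexp_integrable ha h3
  have hfun : ∀ t : ℝ, (t:ℂ)^(a-1) *
      (Complex.exp (-(c1*t)) + Complex.exp (-(c2*t)) - 2*Complex.exp (-(c3*t)))
      = (t:ℂ)^(a-1) * Complex.exp (-(c1*t)) + (t:ℂ)^(a-1) * Complex.exp (-(c2*t))
        - 2 * ((t:ℂ)^(a-1) * Complex.exp (-(c3*t))) := fun t => by ring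
  simp_rw [hfun]
  have i12 : MeasureTheory.IntegrableOn (fun t : ℝ =>
      (t:ℂ)^(a-1) * Complex.exp (-(c1*t)) + (t:ℂ)^(a-1) * Complex.exp (-(c2*t)))
      (Set.Ioi 0) := i1.add i2
  have i3' : MeasureTheory.IntegrableOn (fun t : ℝ =>
      2 * ((t:ℂ)^(a-1) * Complex.exp (-(c3*t)))) (Set.Ioi 0) := i3.const_mul 2
  rw [MeasureTheory.integral_sub i12 i3',
    MeasureTheory.integral_add i1 i2, MeasureTheory.integral_const_mul,
    integral_cpow_mul_cexp ha h1, integral_cpow_mul_cexp ha h2, integral_cpow_mul_cexp ha h3]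
  ring

lemma integrable_F {a : ℂ} (ha : 0 < a.re) {c1 c2 c3 : ℂ}
    (h1 : 0 < c1.re) (h2 : 0 < c2.re) (h3 : 0 < c3.re) :
    MeasureTheory.IntegrableOn (fun t : ℝ => (t:ℂ)^(a-1) *
        (Complex.exp (-(c1*t)) + Complex.exp (-(c2*t)) - 2*Complex.exp (-(c3*t))))
      (Set.Ioi 0) := by
  have i1 := cpow_cexp_integrable ha h1
  have i2 := cpow_cexp_integrable ha h2
  have i3 := cpow_cexp_integrable ha h3
  have base : MeasureTheory.IntegrableOn (fun t : ℝ =>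
      (t:ℂ)^(a-1) * Complex.exp (-(c1*t)) + (t:ℂ)^(a-1) * Complex.exp (-(c2*t))
        - 2 * ((t:ℂ)^(a-1) * Complex.exp (-(c3*t)))) (Set.Ioi 0) :=
    (i1.add i2).sub (i3.const_mul 2)
  refine base.congr_fun (fun t ht => ?_) measurableSet_Ioi
  ring

lemma integral_norm_F_le {a : ℂ} (ha : 0 < a.re) {c1 c2 c3 : ℂ}
    (h1 : 0 < c1.re) (h2 : 0 < c2.re) (h3 : 0 < c3.re) :
    (∫ t in Set.Ioi (0:ℝ), ‖(t:ℂ)^(a-1) *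
        (Complex.exp (-(c1*t)) + Complex.exp (-(c2*t)) - 2*Complex.exp (-(c3*t)))‖)
      ≤ Real.Gamma a.re *
          ((1/c1.re)^a.re + (1/c2.re)^a.re + 2*(1/c3.re)^a.re) := by
  have j1 := rpow_exp_integrable ha h1
  have j2 := rpow_exp_integrable ha h2
  have j3 := rpow_exp_integrable ha h3
  have hbound_int : MeasureTheory.IntegrableOn (fun t : ℝ =>
      t^(a.re-1) * Real.exp (-(c1.re*t)) + t^(a.re-1) * Real.exp (-(c2.re*t))
        + 2 * (t^(a.re-1) * Real.exp (-(c3.re*t)))) (Set.Ioi 0) :=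
    (j1.add j2).add (j3.const_mul 2)
  have hle := MeasureTheory.integral_mono_of_nonneg
    (f := fun t : ℝ => ‖(t:ℂ)^(a-1) *
        (Complex.exp (-(c1*t)) + Complex.exp (-(c2*t)) - 2*Complex.exp (-(c3*t)))‖)
    (μ := MeasureTheory.volume.restrict (Set.Ioi 0))
    (Filter.Eventually.of_forall fun t => norm_nonneg _) hbound_int ?_
  · refine hle.trans (le_of_eq ?_)
    have j12 : MeasureTheory.IntegrableOn (fun t : ℝ =>
        t^(a.re-1) * Real.exp (-(c1.re*t)) + t^(a.re-1) * Real.exp (-(c2.re*t)))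
        (Set.Ioi 0) := j1.add j2
    have j3' : MeasureTheory.IntegrableOn (fun t : ℝ =>
        2 * (t^(a.re-1) * Real.exp (-(c3.re*t)))) (Set.Ioi 0) := j3.const_mul 2
    rw [MeasureTheory.integral_add j12 j3',
      MeasureTheory.integral_add j1 j2, MeasureTheory.integral_const_mul,
      Real.integral_rpow_mul_exp_neg_mul_Ioi ha h1,
      Real.integral_rpow_mul_exp_neg_mul_Ioi ha h2,
      Real.integral_rpow_mul_exp_neg_mul_Ioi ha h3]
    ring
  · filter_upwards [MeasureTheory.ae_restrict_mem measurableSet_Ioi] with t ht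
    rw [Set.mem_Ioi] at ht
    have hpow : (0:ℝ) ≤ t ^ (a.re - 1) := (Real.rpow_pos_of_pos ht _).le
    have hn1 : ‖Complex.exp (-(c1*t))‖ = Real.exp (-(c1.re*t)) := by
      rw [Complex.norm_exp]
      congr 1
      simp [Complex.mul_re]
    have hn2 : ‖Complex.exp (-(c2*t))‖ = Real.exp (-(c2.re*t)) := by
      rw [Complex.norm_exp]
      congr 1
      simp [Complex.mul_re]
    have hn3 : ‖Complex.exp (-(c3*t))‖ = Real.exp (-(c3.re*t)) := by
      rw [Complex.norm_exp]
      congr 1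
      simp [Complex.mul_re]
    have htri : ‖Complex.exp (-(c1*t)) + Complex.exp (-(c2*t)) - 2*Complex.exp (-(c3*t))‖
        ≤ Real.exp (-(c1.re*t)) + Real.exp (-(c2.re*t)) + 2 * Real.exp (-(c3.re*t)) := by
      refine (norm_sub_le _ _).trans ?_
      gcongr
      · exact (norm_add_le _ _).trans (by rw [hn1, hn2])
      · rw [norm_mul, hn3]; norm_num
    calc ‖(t:ℂ)^(a-1) * (Complex.exp (-(c1*t)) + Complex.exp (-(c2*t))
            - 2*Complex.exp (-(c3*t)))‖
        = t^(a.re-1) * ‖Complex.exp (-(c1*t)) + Complex.exp (-(c2*t))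
            - 2*Complex.exp (-(c3*t))‖ := by
          rw [norm_mul, Complex.norm_cpow_eq_rpow_re_of_pos ht, Complex.sub_re, Complex.one_re]
      _ ≤ t^(a.re-1) * (Real.exp (-(c1.re*t)) + Real.exp (-(c2.re*t))
            + 2 * Real.exp (-(c3.re*t))) := by
          exact mul_le_mul_of_nonneg_left htri hpow
      _ = t^(a.re-1) * Real.exp (-(c1.re*t)) + t^(a.re-1) * Real.exp (-(c2.re*t))
            + 2 * (t^(a.re-1) * Real.exp (-(c3.re*t))) := by ring

/-- The Hurwitz zeta function given by its defining series (valid for Re a > 1). -/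
noncomputable def hzeta (a v : ℂ) : ℂ := ∑' n : ℕ, ((n : ℂ) + v) ^ (-a)

theorem stmt16 (p a : ℂ) (hp : 0 < p.re) (hp1 : |p.re| < 1) (ha : 1 < a.re) :
    (∫ x in Set.Ioi (0 : ℝ),
        (x : ℂ) ^ (a - 1) * (Complex.cosh (p * x) - 1) / Complex.sinh (x : ℂ)) =
      (Complex.Gamma a / 2 ^ a) *
        (hzeta a (1 / 2 - p / 2) + hzeta a (1 / 2 + p / 2) - 2 * hzeta a (1 / 2)) := by
  have hp2 : p.re < 1 := (abs_lt.mp hp1).2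
  have ha0 : 0 < a.re := by linarith
  set F : ℕ → ℝ → ℂ := fun n x => (x:ℂ)^(a-1) *
      (Complex.exp (-((2*(n:ℂ)+1-p) * x)) + Complex.exp (-((2*(n:ℂ)+1+p) * x))
        - 2 * Complex.exp (-((2*(n:ℂ)+1) * x))) with hF
  have hre1 : ∀ n : ℕ, (2*(n:ℂ)+1-p).re = 2*(n:ℝ)+1-p.re := by intro n; simp
  have hre2 : ∀ n : ℕ, (2*(n:ℂ)+1+p).re = 2*(n:ℝ)+1+p.re := by intro n; simp
  have hre3 : ∀ n : ℕ, (2*(n:ℂ)+1).re = 2*(n:ℝ)+1 := by intro n; simp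
  have hc1 : ∀ n : ℕ, 0 < (2*(n:ℂ)+1-p).re := by
    intro n; rw [hre1]; have := Nat.cast_nonneg (α := ℝ) n; linarith
  have hc2 : ∀ n : ℕ, 0 < (2*(n:ℂ)+1+p).re := by
    intro n; rw [hre2]; have := Nat.cast_nonneg (α := ℝ) n; linarith
  have hc3 : ∀ n : ℕ, 0 < (2*(n:ℂ)+1).re := by
    intro n; rw [hre3]; have := Nat.cast_nonneg (α := ℝ) n; linarith
  have hint : ∀ n : ℕ, MeasureTheory.IntegrableOn (F n) (Set.Ioi 0) := fun n =>
    integrable_F ha0 (hc1 n) (hc2 n) (hc3 n)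
  have hGpos : 0 < Real.Gamma a.re := Real.Gamma_pos_of_pos ha0
  have hsum : Summable (fun n : ℕ => ∫ x in Set.Ioi (0:ℝ), ‖F n x‖) := by
    have hcomp : Summable (fun n : ℕ =>
        (4 * Real.Gamma a.re) * (1 / |(n:ℝ) + (1 - p.re)| ^ a.re)) :=
      ((Real.summable_one_div_nat_add_rpow (1 - p.re) a.re).mpr ha).mul_left _
    apply hcomp.of_nonneg_of_le
      (fun n => MeasureTheory.integral_nonneg (fun x => norm_nonneg _))
    intro n
    refine (integral_norm_F_le ha0 (hc1 n) (hc2 n) (hc3 n)).trans ?_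
    have hnn : (0:ℝ) ≤ (n:ℝ) := Nat.cast_nonneg n
    have hbase : (0:ℝ) < (n:ℝ) + (1 - p.re) := by linarith
    have habs : |(n:ℝ) + (1 - p.re)| = (n:ℝ) + (1 - p.re) := abs_of_pos hbase
    have hu : ∀ r : ℝ, (n:ℝ) + (1 - p.re) ≤ r →
        (1/r) ^ a.re ≤ 1 / |(n:ℝ) + (1 - p.re)| ^ a.re := by
      intro r hr
      rw [habs, one_div, Real.inv_rpow (by linarith : (0:ℝ) ≤ r), one_div]
      exact inv_anti₀ (Real.rpow_pos_of_pos hbase _)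
        (Real.rpow_le_rpow hbase.le hr ha0.le)
    rw [hre1, hre2, hre3]
    have e1 := hu (2*(n:ℝ)+1-p.re) (by linarith)
    have e2 := hu (2*(n:ℝ)+1+p.re) (by linarith)
    have e3 := hu (2*(n:ℝ)+1) (by linarith)
    have hupos : (0:ℝ) ≤ 1 / |(n:ℝ) + (1 - p.re)| ^ a.re := by positivity
    have hq1 : (0:ℝ) ≤ 1/(2*(n:ℝ)+1-p.re) := by
      apply le_of_lt; apply div_pos one_pos; linarith
    nlinarith [hGpos.le, Real.rpow_nonneg hq1 a.re,
      Real.rpow_nonneg (by positivity : (0:ℝ) ≤ 1/(2*(n:ℝ)+1+p.re)) a.re,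
      Real.rpow_nonneg (by positivity : (0:ℝ) ≤ 1/(2*(n:ℝ)+1)) a.re]
  have key := MeasureTheory.hasSum_integral_of_summable_integral_norm hint hsum
  have hpt : ∀ x ∈ Set.Ioi (0:ℝ),
      (x:ℂ)^(a-1) * (Complex.cosh (p*x) - 1) / Complex.sinh (x:ℂ) = ∑' n, F n x := by
    intro x hx
    rw [mul_div_assoc]
    exact ((hasSum_kernel p hx).mul_left ((x:ℂ)^(a-1))).tsum_eq.symm
  rw [MeasureTheory.setIntegral_congr_fun measurableSet_Ioi hpt, ← key.tsum_eq]
  have hv1 : (0:ℝ) < ((1:ℂ)/2 - p/2).re := by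
    have h : ((1:ℂ)/2 - p/2) = ((2⁻¹:ℝ):ℂ) * (1 - p) := by push_cast; ring
    rw [h, Complex.re_ofReal_mul, Complex.sub_re, Complex.one_re]
    norm_num; linarith
  have hv2 : (0:ℝ) < ((1:ℂ)/2 + p/2).re := by
    have h : ((1:ℂ)/2 + p/2) = ((2⁻¹:ℝ):ℂ) * (1 + p) := by push_cast; ring
    rw [h, Complex.re_ofReal_mul, Complex.add_re, Complex.one_re]
    norm_num; linarith
  have hv3 : (0:ℝ) < ((1:ℂ)/2).re := by norm_num
  have hval : ∀ n : ℕ, (∫ x in Set.Ioi (0:ℝ), F n x)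
      = (Complex.Gamma a * (2:ℂ)^(-a)) *
        (((n:ℂ) + (1/2 - p/2))^(-a) + ((n:ℂ) + (1/2 + p/2))^(-a)
          - 2*((n:ℂ) + 1/2)^(-a)) := by
    intro n
    rw [hF]
    rw [integral_F ha0 (hc1 n) (hc2 n) (hc3 n)]
    have split : ∀ v : ℂ, 0 < v.re → (2*v)^(-a) = (2:ℂ)^(-a) * v^(-a) := by
      intro v hv
      have hz : v ≠ 0 := fun h => by simp [h] at hv
      have h2 : (2:ℂ) = ((2:ℝ):ℂ) := by norm_num
      rw [h2, ofReal_mul_cpow two_pos hz]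
    have hw1 : (0:ℝ) < ((n:ℂ) + (1/2 - p/2)).re := by
      rw [Complex.add_re, Complex.natCast_re]
      have := Nat.cast_nonneg (α := ℝ) n
      linarith
    have hw2 : (0:ℝ) < ((n:ℂ) + (1/2 + p/2)).re := by
      rw [Complex.add_re, Complex.natCast_re]
      have := Nat.cast_nonneg (α := ℝ) n
      linarith
    have hw3 : (0:ℝ) < ((n:ℂ) + 1/2).re := by
      rw [Complex.add_re, Complex.natCast_re]
      have := Nat.cast_nonneg (α := ℝ) n
      have : ((1:ℂ)/2).re = 1/2 := by norm_num
      rw [this]; positivity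
    have E1 : (2*(n:ℂ)+1-p) = 2*((n:ℂ) + (1/2 - p/2)) := by ring
    have E2 : (2*(n:ℂ)+1+p) = 2*((n:ℂ) + (1/2 + p/2)) := by ring
    have E3 : (2*(n:ℂ)+1) = 2*((n:ℂ) + 1/2) := by ring
    rw [E1, E2, E3, split _ hw1, split _ hw2, split _ hw3]
    ring
  have hs1 : Summable (fun n : ℕ => ((n:ℂ) + (1/2 - p/2))^(-a)) :=
    summable_hzeta_term ha hv1
  have hs2 : Summable (fun n : ℕ => ((n:ℂ) + (1/2 + p/2))^(-a)) :=
    summable_hzeta_term ha hv2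
  have hs3 : Summable (fun n : ℕ => ((n:ℂ) + 1/2)^(-a)) := by
    have := summable_hzeta_term (v := 1/2) ha (by norm_num)
    exact this
  calc ∑' n, ∫ x in Set.Ioi (0:ℝ), F n x
      = ∑' n : ℕ, (Complex.Gamma a * (2:ℂ)^(-a)) *
        (((n:ℂ) + (1/2 - p/2))^(-a) + ((n:ℂ) + (1/2 + p/2))^(-a)
          - 2*((n:ℂ) + 1/2)^(-a)) := tsum_congr hval
    _ = (Complex.Gamma a * (2:ℂ)^(-a)) *
        ∑' n : ℕ, (((n:ℂ) + (1/2 - p/2))^(-a) + ((n:ℂ) + (1/2 + p/2))^(-a)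
          - 2*((n:ℂ) + 1/2)^(-a)) := tsum_mul_left
    _ = (Complex.Gamma a * (2:ℂ)^(-a)) *
        ((∑' n : ℕ, ((n:ℂ) + (1/2 - p/2))^(-a)) + (∑' n : ℕ, ((n:ℂ) + (1/2 + p/2))^(-a))
          - 2 * ∑' n : ℕ, ((n:ℂ) + 1/2)^(-a)) := by
        rw [Summable.tsum_sub (hs1.add hs2) (hs3.mul_left 2), Summable.tsum_add hs1 hs2, tsum_mul_left]
    _ = (Complex.Gamma a / 2 ^ a) *
        (hzeta a (1 / 2 - p / 2) + hzeta a (1 / 2 + p / 2) - 2 * hzeta a (1 / 2)) := by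
        rw [hzeta, hzeta, hzeta, Complex.cpow_neg]; ring
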